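/- Variational formula for effective conductances (Hadamard-type): in a metric graph with boundary points $z_1(r_1),\dots,z_n(r_n)$ at distances $r_i$ along the $n$ edges adjacent to the boundary $A$, the effective conductances $C^{\mathrm{eff}}_{ij}(r_1,\dots,r_n)$ of the remaining network satisfy, for $j \ne i$: $\partial_{r_i} C^{\mathrm{eff}}_{ij} = C^{\mathrm{eff}}_{ij}\sum_{j'\ne i} C^{\mathrm{eff}}_{ij'}$, and for distinct $i,j,j'$ with $i\notin\{j,j'\}$: $\partial_{r_i} C^{\mathrm{eff}}_{jj'} = -C^{\mathrm{eff}}_{ij} C^{\mathrm{eff}}_{ij'}$. -/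

import Mathlib

open MeasureTheory ProbabilityTheory Filter

noncomputable section

/-! ### One-dimensional Brownian motion, bridges and local time -/

/-- Occupation-density local time at level `0` of `f` on `[a, b]` (defined as the limit of the
normalised occupation times of `[-ε, ε]`, junk value if the limit does not exist). -/
def localTimeOn (f : ℝ → ℝ) (a b : ℝ) : ℝ :=
  limUnder (nhdsWithin (0 : ℝ) (Set.Ioi 0)) fun ε =>
    (1 / (2 * ε)) * ∫ s in a..b, (if |f s| ≤ ε then (1 : ℝ) else 0)

/-- `l` is the local time at level `0` accumulated by the path `f` on `[0, T]`:
`l = lim_{ε → 0+} (2ε)⁻¹ ∫_0^T 1_{|f s| ≤ ε} ds`. -/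
def HasLocalTimeAtZero (f : ℝ → ℝ) (T l : ℝ) : Prop :=
  Tendsto (fun ε => (1 / (2 * ε)) * ∫ s in (0 : ℝ)..T, (if |f s| ≤ ε then (1 : ℝ) else 0))
    (nhdsWithin (0 : ℝ) (Set.Ioi 0)) (nhds l)

/-- `W` is a standard Brownian motion started from `w0` under `P`: continuous paths, Gaussian
increments of variance `t - s`, and independent increments. -/
structure IsBrownianMotion {Ω : Type} [MeasurableSpace Ω] (P : Measure Ω)
    (W : ℝ → Ω → ℝ) (w0 : ℝ) : Prop where
  meas : ∀ t, Measurable (W t)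
  start : ∀ᵐ ω ∂P, W 0 ω = w0
  cont : ∀ᵐ ω ∂P, Continuous fun t => W t ω
  gauss_incr : ∀ s t : ℝ, 0 ≤ s → s ≤ t →
    P.map (fun ω => W t ω - W s ω) = gaussianReal 0 (t - s).toNNReal
  indep_incr : ∀ n : ℕ, ∀ t : Fin (n + 1) → ℝ, (∀ i, 0 ≤ t i) → Monotone t →
    iIndepFun
      (fun i : Fin n => fun ω => W (t i.succ) ω - W (t i.castSucc) ω) P

/-- `X` is a Brownian bridge of time-length `T` from `w0` to `wT` under `P`
(standard Brownian motion conditioned on its endpoint values, realised through the usual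
pathwise construction from a standard Brownian motion). -/
def IsBrownianBridge {Ω : Type} [MeasurableSpace Ω] (P : Measure Ω)
    (X : ℝ → Ω → ℝ) (T w0 wT : ℝ) : Prop :=
  ∃ B : ℝ → Ω → ℝ, IsBrownianMotion P B 0 ∧
    ∀ ω t, X t ω = w0 + t / T * (wT - w0) + (B t ω - t / T * B T ω)

/-! ### Electrical networks -/

/-- A finite weighted graph (electrical network): symmetric nonnegative conductances with zero
diagonal; `0 < C u v` means that `u` and `v` are joined by an edge of conductance `C u v`. -/
structure WGraph where
  V : Type
  fin : Fintype V
  deq : DecidableEq V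
  C : V → V → ℝ
  symm : ∀ u v, C u v = C v u
  nonneg : ∀ u v, 0 ≤ C u v
  loopless : ∀ v, C v v = 0

attribute [instance] WGraph.fin WGraph.deq

namespace WGraph

variable (G : WGraph)

def Adj (u v : G.V) : Prop := 0 < G.C u v

instance (u v : G.V) : Decidable (G.Adj u v) := by unfold WGraph.Adj; infer_instance

/-- The resistance (= metric-graph length) of the edge from `u` to `v`. -/
def R (u v : G.V) : ℝ := 1 / G.C u v

/-- A walk in the graph from `u` to `v`, encoded as the list of visited vertices. -/
def IsWalk (u v : G.V) (l : List G.V) : Prop :=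
  l.Chain' G.Adj ∧ l.head? = some u ∧ l.getLast? = some v

def Connected : Prop := ∀ u v : G.V, ∃ l : List G.V, G.IsWalk u v l

/-- Interior vertices with respect to a boundary set `A`. -/
def inter (A : Finset G.V) : Type := {x : G.V // x ∉ A}

instance (A : Finset G.V) : Fintype (G.inter A) := by unfold inter; infer_instance
instance (A : Finset G.V) : DecidableEq (G.inter A) := by unfold inter; infer_instance

/-- The Laplacian matrix restricted to the interior vertices. -/
def lapMat (A : Finset G.V) : Matrix (G.inter A) (G.inter A) ℝ := fun x y =>
  if x = y then ∑ z : G.V, G.C x.1 z else -G.C x.1 y.1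

/-- The Green function of the network with Dirichlet boundary condition on `A`. -/
def green (A : Finset G.V) : Matrix (G.inter A) (G.inter A) ℝ := (G.lapMat A)⁻¹

/-- The harmonic extension to `V` of the function `h` given on the boundary `A`. -/
def harm (A : Finset G.V) (h : G.V → ℝ) (x : G.V) : ℝ :=
  if hx : x ∈ A then h x
  else ∑ y : G.inter A, G.green A ⟨x, hx⟩ y * ∑ a ∈ A, G.C y.1 a * h a

/-- The effective conductance matrix of the boundary set `A`: the conductances of the electrically
equivalent network on the vertex set `A` (Schur complement of the Laplacian). -/
def Ceff (A : Finset G.V) (x y : G.V) : ℝ :=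
  G.C x y + ∑ z : G.inter A, ∑ w : G.inter A, G.C x z.1 * G.green A z w * G.C w.1 y

/-- The two-point effective resistance between `x` and `y`. -/
def Reff2 (x y : G.V) : ℝ := 1 / G.Ceff {x, y} x y

/-- The effective conductance between two boundary pieces `S, T ⊆ A`. -/
def CeffSets (A S T : Finset G.V) : ℝ := ∑ x ∈ S, ∑ y ∈ T, G.Ceff A x y

/-- The effective resistance between a vertex `x` and a set `A` of vertices. -/
def ReffVertexSet (x : G.V) (A : Finset G.V) : ℝ :=
  1 / ∑ y ∈ A, G.Ceff (insert x A) x y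

/-- Points of the metric graph `𝒢̃`: a point is described by an oriented edge `(u, v)` together
with a coordinate `s ∈ [0, R(u,v)]` (so each point has two redundant descriptions). -/
def MGPoint : Type :=
  {p : G.V × G.V × ℝ // G.Adj p.1 p.2.1 ∧ p.2.2 ∈ Set.Icc 0 (G.R p.1 p.2.1)}

end WGraph

/-! ### The Gaussian free field on a metric graph -/

/-- The Gaussian free field on the metric graph of `G`, with boundary condition `h` on the
boundary set `A`, defined on the probability space `(Ω, P)`.  `φ u v s` is the value of the field
at the point of the edge from `u` to `v` at distance `s` from `u`.  The restriction of the field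
to the vertices is the discrete GFF (a Gaussian vector with mean the harmonic extension of `h`
and covariance the Green function), and given the vertex values the field on the edges is given
by independent Brownian bridges. -/
structure MGGFF (G : WGraph) (A : Finset G.V) (h : G.V → ℝ)
    {Ω : Type} [MeasurableSpace Ω] (P : Measure Ω) where
  φ : G.V → G.V → ℝ → Ω → ℝ
  vertexVal : G.V → Ω → ℝ
  meas_φ : ∀ u v s, Measurable (φ u v s)
  meas_vertexVal : ∀ x, Measurable (vertexVal x)
  φ_start : ∀ u v, G.Adj u v → ∀ ω, φ u v 0 ω = vertexVal u ω
  φ_symm : ∀ u v, G.Adj u v → ∀ s ω, φ u v s ω = φ v u (G.R u v - s) ω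
  boundary : ∀ x ∈ A, ∀ ω, vertexVal x ω = h x
  cont : ∀ u v, G.Adj u v → ∀ ω, Continuous fun s => φ u v s ω
  gaussian : ∀ lam : G.inter A → ℝ,
    P.map (fun ω => ∑ x : G.inter A, lam x * vertexVal x.1 ω) =
      gaussianReal (∑ x : G.inter A, lam x * G.harm A h x.1)
        (∑ x : G.inter A, ∑ y : G.inter A, lam x * G.green A x y * lam y).toNNReal
  bridges : ∃ ord : G.V → ℕ, Function.Injective ord ∧
    ∃ b : G.V → G.V → ℝ → Ω → ℝ,
      (∀ u v, G.Adj u v → IsBrownianBridge P (b u v) (G.R u v) 0 0) ∧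
      (∀ u v, G.Adj u v → ∀ s ω,
        φ u v s ω = vertexVal u ω + s / G.R u v * (vertexVal v ω - vertexVal u ω) + b u v s ω) ∧
      iIndepFun
        (fun e : {p : G.V × G.V // G.Adj p.1 p.2 ∧ ord p.1 < ord p.2} =>
          fun ω => fun s : ℝ => b e.1.1 e.1.2 s ω) P ∧
      IndepFun (fun ω => fun x : G.V => vertexVal x ω)
        (fun ω => fun e : {p : G.V × G.V // G.Adj p.1 p.2 ∧ ord p.1 < ord p.2} =>
          fun s : ℝ => b e.1.1 e.1.2 s ω) P

namespace MGGFF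

variable {G : WGraph} {A : Finset G.V} {h : G.V → ℝ} {Ω : Type} [MeasurableSpace Ω]
  {P : Measure Ω} (Γ : MGGFF G A h P)

/-- Local time at level `0` accumulated by the field on the portion `[s₁, s₂]` of the edge
from `u` to `v`. -/
def segLT (u v : G.V) (s₁ s₂ : ℝ) (ω : Ω) : ℝ := localTimeOn (fun r => Γ.φ u v r ω) s₁ s₂

/-- Local time at level `0` accumulated by the field along the whole edge from `u` to `v`. -/
def edgeLT (u v : G.V) (ω : Ω) : ℝ := Γ.segLT u v 0 (G.R u v) ω

/-- Local time at level `0` accumulated along a walk. -/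
def walkLT (l : List G.V) (ω : Ω) : ℝ :=
  ((l.zip l.tail).map fun p => Γ.edgeLT p.1 p.2 ω).sum

/-- The local-time pseudo-distance `δ_{u,v}` between two vertices: the infimum over continuous
paths from `u` to `v` of the local time at `0` accumulated by the field along the path
(the infimum is realised over walks in the graph). -/
def δ (u v : G.V) (ω : Ω) : ℝ :=
  sInf {d | ∃ l : List G.V, G.IsWalk u v l ∧ d = Γ.walkLT l ω}

/-- The pseudo-distance between two sets of vertices. -/
def δSet (S T : Finset G.V) (ω : Ω) : ℝ :=
  sInf {d | ∃ u ∈ S, ∃ v ∈ T, d = Γ.δ u v ω}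

/-- The value of the field at a point of the metric graph. -/
def atPoint (x : G.MGPoint) (ω : Ω) : ℝ := Γ.φ x.1.1 x.1.2.1 x.1.2.2 ω

/-- The pseudo-distance from a vertex `u` to the boundary `A`. -/
def δvA (ω : Ω) (u : G.V) : ℝ :=
  sInf {d | ∃ a ∈ A, ∃ l, G.IsWalk u a l ∧ d = Γ.walkLT l ω}

/-- The pseudo-distance `δ_{x,A}` from a point `x` of the metric graph to the boundary `A`. -/
def δPA (x : G.MGPoint) (ω : Ω) : ℝ :=
  min (Γ.segLT x.1.1 x.1.2.1 0 x.1.2.2 ω + Γ.δvA ω x.1.1)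
    (Γ.segLT x.1.1 x.1.2.1 x.1.2.2 (G.R x.1.1 x.1.2.1) ω + Γ.δvA ω x.1.2.1)

/-- The minimum of the field on the portion `[s₁, s₂]` of the edge from `u` to `v`. -/
def segMin (u v : G.V) (s₁ s₂ : ℝ) (ω : Ω) : ℝ :=
  sInf ((fun s => Γ.φ u v s ω) '' Set.Icc s₁ s₂)

/-- The minimum of the field along the whole edge from `u` to `v`. -/
def edgeMin (u v : G.V) (ω : Ω) : ℝ := Γ.segMin u v 0 (G.R u v) ω

/-- The minimum of the field along a walk. -/
def walkMin (l : List G.V) (ω : Ω) : ℝ :=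
  sInf ({m | ∃ x ∈ l, m = Γ.vertexVal x ω} ∪
    {m | ∃ p ∈ l.zip l.tail, m = Γ.edgeMin p.1 p.2 ω})

/-- `Ĩ_{u,A}`: the supremum over continuous paths joining the vertex `u` to `A` of the minimum
of the field along the path. -/
def supMinvA (ω : Ω) (u : G.V) : ℝ :=
  sSup {m | ∃ a ∈ A, ∃ l, G.IsWalk u a l ∧ m = Γ.walkMin l ω}

/-- `Ĩ_{x,A}` for a point `x` of the metric graph. -/
def supMinPA (x : G.MGPoint) (ω : Ω) : ℝ :=
  max (min (Γ.segMin x.1.1 x.1.2.1 0 x.1.2.2 ω) (Γ.supMinvA ω x.1.1))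
    (min (Γ.segMin x.1.1 x.1.2.1 x.1.2.2 (G.R x.1.1 x.1.2.1) ω) (Γ.supMinvA ω x.1.2.1))

/-- `I_{x,A} = min(0, Ĩ_{x,A})`. -/
def IPA (x : G.MGPoint) (ω : Ω) : ℝ := min 0 (Γ.supMinPA x ω)

/-- A walk along whose edges the field stays `≥ a`. -/
def WalkAbove (a : ℝ) (ω : Ω) (l : List G.V) : Prop :=
  ∀ p ∈ l.zip l.tail, ∀ s ∈ Set.Icc 0 (G.R p.1 p.2), a ≤ Γ.φ p.1 p.2 s ω

/-- Membership of the metric-graph point `x` in the first passage set `Λ̃_a` of level `a`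
started from the set of vertices `S`: there is a continuous path from `S` to `x` along which the
field stays `≥ a`. -/
def InFPS (a : ℝ) (S : Finset G.V) (x : G.MGPoint) (ω : Ω) : Prop :=
  (∃ u ∈ S, ∃ l, G.IsWalk u x.1.1 l ∧ Γ.WalkAbove a ω l ∧
    ∀ s ∈ Set.Icc 0 x.1.2.2, a ≤ Γ.φ x.1.1 x.1.2.1 s ω) ∨
  (∃ u ∈ S, ∃ l, G.IsWalk u x.1.2.1 l ∧ Γ.WalkAbove a ω l ∧
    ∀ s ∈ Set.Icc x.1.2.2 (G.R x.1.1 x.1.2.1), a ≤ Γ.φ x.1.1 x.1.2.1 s ω)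

end MGGFF

/-- A potential (test function) on the metric graph of `G`: a continuously differentiable
function on each edge, consistent under orientation reversal of the edges. -/
structure WGraph.Potential (G : WGraph) where
  f : G.V → G.V → ℝ → ℝ
  symm : ∀ u v, G.Adj u v → ∀ s, f u v s = f v u (G.R u v - s)
  smooth : ∀ u v, G.Adj u v → ContDiff ℝ 1 (f u v)

/-- The Dirichlet energy of a potential on the metric graph. -/
def WGraph.Potential.energy {G : WGraph} (F : G.Potential) : ℝ :=
  (1 / 2) * ∑ u : G.V, ∑ v : G.V,
    if G.Adj u v then ∫ s in (0 : ℝ)..G.R u v, deriv (F.f u v) s ^ 2 else 0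

namespace MGGFF

variable {G : WGraph} {A : Finset G.V} {h : G.V → ℝ} {Ω : Type} [MeasurableSpace Ω]
  {P : Measure Ω} (Γ : MGGFF G A h P)

/-- The effective conductance (Dirichlet variational principle) between the first passage set
`Λ̃_a` started from `S` and the set of vertices `T`; it is `∞` when the two sets intersect. -/
def condFPS (a : ℝ) (S T : Finset G.V) (ω : Ω) : ENNReal :=
  sInf {E | ∃ F : G.Potential,
    (∀ x : G.MGPoint, Γ.InFPS a S x ω → F.f x.1.1 x.1.2.1 x.1.2.2 = 0) ∧
    (∀ v ∈ T, ∀ w, G.Adj v w → F.f v w 0 = 1) ∧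
    E = ENNReal.ofReal F.energy}

/-- The effective conductance between the first passage set `Λ̃_a` started from `S` and the
single vertex `x0`. -/
def condFPSVertex (a : ℝ) (S : Finset G.V) (x0 : G.V) (ω : Ω) : ENNReal :=
  sInf {E | ∃ F : G.Potential,
    (∀ x : G.MGPoint, Γ.InFPS a S x ω → F.f x.1.1 x.1.2.1 x.1.2.2 = 0) ∧
    (∀ w, G.Adj x0 w → F.f x0 w 0 = 1) ∧
    E = ENNReal.ofReal F.energy}

/-- The effective resistance between the vertex `x0` and the first passage set `Λ̃_a`. -/
def reffFPSVertex (a : ℝ) (S : Finset G.V) (x0 : G.V) (ω : Ω) : ℝ :=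
  ((Γ.condFPSVertex a S x0 ω)⁻¹).toReal

end MGGFF

/-- The network obtained from `G` by exploring, for each `i`, a portion of length `r i` of the
edge `eᵢ = (x i, y i)` adjacent to the boundary `A`, starting from `x i ∈ A`: the boundary and
the explored segments are removed, and each remaining partial edge becomes an edge of resistance
`R(eᵢ) - r i` joining a new vertex `zᵢ(r i)` (encoded by `Sum.inr i`) to `y i`. -/
def WGraph.explored (G : WGraph) (A : Finset G.V) {n : ℕ} (x y : Fin n → G.V)
    (r : Fin n → ℝ) : WGraph where
  V := {v : G.V // v ∉ A} ⊕ Fin n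
  fin := inferInstance
  deq := inferInstance
  C := fun p q =>
    match p, q with
    | Sum.inl u, Sum.inl v => G.C u.1 v.1
    | Sum.inl v, Sum.inr i => if v.1 = y i then max 0 (G.R (x i) (y i) - r i)⁻¹ else 0
    | Sum.inr i, Sum.inl v => if v.1 = y i then max 0 (G.R (x i) (y i) - r i)⁻¹ else 0
    | Sum.inr _, Sum.inr _ => 0
  symm := by rintro (u | i) (v | j) <;> simp [G.symm]
  nonneg := by
    rintro (u | i) (v | j) <;> simp [G.nonneg] <;> split <;> simp [le_max_left]
  loopless := by rintro (u | i) <;> simp [G.loopless]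

/-- `C^eff_{ij}(r₁, …, r_n)`: the effective conductance between the exploration points
`zᵢ(rᵢ)` and `z_j(r_j)` in the partially explored network. -/
def WGraph.CeffExplored (G : WGraph) (A : Finset G.V) {n : ℕ} (x y : Fin n → G.V)
    (r : Fin n → ℝ) (i j : Fin n) : ℝ :=
  (G.explored A x y r).Ceff (Finset.univ.image Sum.inr) (Sum.inr i) (Sum.inr j)


section Stmt12Aux

open Matrix Finset

namespace Stmt12Aux

variable (G : WGraph) (A : Finset G.V) {n : ℕ} (x y : Fin n → G.V)

/-- The vertex type of the explored graph. -/
abbrev SumV (G : WGraph) (A : Finset G.V) (n : ℕ) := ({v : G.V // v ∉ A} ⊕ Fin n)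

/-- The boundary of the explored graph. -/
abbrev exB (G : WGraph) (A : Finset G.V) (n : ℕ) : Finset (SumV G A n) :=
  Finset.univ.image Sum.inr

/-- The interior of the explored graph. -/
abbrev K (G : WGraph) (A : Finset G.V) (n : ℕ) := {p : SumV G A n // p ∉ exB G A n}

lemma inl_not_mem (u : {v : G.V // v ∉ A}) : (Sum.inl u : SumV G A n) ∉ exB G A n := by
  simp [exB]

/-- Interior vertices of `G` as interior vertices of the explored graph. -/
def toK (u : {v : G.V // v ∉ A}) : K G A n := ⟨Sum.inl u, inl_not_mem G A u⟩

lemma toK_surj : Function.Surjective (toK G A (n := n)) := by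
  rintro ⟨(u | i), hp⟩
  · exact ⟨u, rfl⟩
  · exact absurd (Finset.mem_image_of_mem _ (Finset.mem_univ i)) hp

lemma toK_inj : Function.Injective (toK G A (n := n)) := by
  intro u v h
  simpa [toK] using h

variable (hy : ∀ i, y i ∉ A)

/-- `zᵢ`-side endpoints as interior vertices. -/
def Y (i : Fin n) : K G A n := toK G A ⟨y i, hy i⟩

/-- conductance of the remaining piece of edge `i`. -/
def cf (r : Fin n → ℝ) (i : Fin n) : ℝ := max 0 (G.R (x i) (y i) - r i)⁻¹

/-- The interior Laplacian of the explored graph. -/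
def Lm (r : Fin n → ℝ) : Matrix (K G A n) (K G A n) ℝ :=
  (G.explored A x y r).lapMat (exB G A n)

/-- The Green function of the explored graph. -/
def gm (r : Fin n → ℝ) : Matrix (K G A n) (K G A n) ℝ := (Lm G A x y r)⁻¹

lemma green_eq (r : Fin n → ℝ) :
    (G.explored A x y r).green (exB G A n) = gm G A x y r := rfl

lemma C_inr_left (r : Fin n → ℝ) (i : Fin n) (z : K G A n) :
    (G.explored A x y r).C (Sum.inr i) z.1 = if z = Y G A y hy i then cf G x y r i else 0 := by
  obtain ⟨(u | k), hz⟩ := z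
  · show (if u.1 = y i then _ else _) = _
    have : (⟨Sum.inl u, hz⟩ : K G A n) = Y G A y hy i ↔ u.1 = y i := by
      simp [Y, toK, Subtype.ext_iff, Sum.inl.injEq]
    rw [if_congr this.symm rfl rfl]
    rfl
  · exact absurd (Finset.mem_image_of_mem _ (Finset.mem_univ k)) hz

lemma C_left_inr (r : Fin n → ℝ) (i : Fin n) (z : K G A n) :
    (G.explored A x y r).C z.1 (Sum.inr i) = if z = Y G A y hy i then cf G x y r i else 0 := by
  exact ((G.explored A x y r).symm _ _).trans (C_inr_left G A x y hy r i z)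

lemma ceff_eq (r : Fin n → ℝ) (i j : Fin n) :
    G.CeffExplored A x y r i j =
      cf G x y r i * cf G x y r j * gm G A x y r (Y G A y hy i) (Y G A y hy j) := by
  show (G.explored A x y r).C (Sum.inr i) (Sum.inr j) +
      ∑ z : K G A n, ∑ w : K G A n, _ * _ * _ = _
  have h0 : (G.explored A x y r).C (Sum.inr i) (Sum.inr j) = 0 := rfl
  rw [h0, zero_add]
  have : ∀ z : K G A n,
      ∑ w : K G A n, (G.explored A x y r).C (Sum.inr i) z.1 *
          (G.explored A x y r).green (exB G A n) z w * (G.explored A x y r).C w.1 (Sum.inr j) =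
        ∑ w : K G A n, if z = Y G A y hy i then (if w = Y G A y hy j then
          cf G x y r i * gm G A x y r z w * cf G x y r j else 0) else 0 := by
    intro z
    refine Finset.sum_congr rfl fun w _ => ?_
    rw [C_inr_left G A x y hy, C_left_inr G A x y hy, green_eq]
    split_ifs <;> ring
  refine (Finset.sum_congr rfl fun z _ => this z).trans ?_
  simp [Finset.sum_ite_eq']
  ring

lemma Lm_apply (r : Fin n → ℝ) (z w : K G A n) :
    Lm G A x y r z w = if z = w then ∑ q : SumV G A n, (G.explored A x y r).C z.1 q
      else -(G.explored A x y r).C z.1 w.1 := rfl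

lemma C_int_const (r r' : Fin n → ℝ) (z w : K G A n) :
    (G.explored A x y r).C z.1 w.1 = (G.explored A x y r').C z.1 w.1 := by
  obtain ⟨(u | k), hz⟩ := z
  · obtain ⟨(u' | k'), hw⟩ := w
    · rfl
    · exact absurd (Finset.mem_image_of_mem _ (Finset.mem_univ k')) hw
  · exact absurd (Finset.mem_image_of_mem _ (Finset.mem_univ k)) hz

lemma sum_C_split (r : Fin n → ℝ) (z : K G A n) :
    ∑ q : SumV G A n, (G.explored A x y r).C z.1 q =
      (∑ w : K G A n, (G.explored A x y r).C z.1 w.1) +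
        ∑ j, (if z = Y G A y hy j then cf G x y r j else 0) := by
  refine (Fintype.sum_sum_type _).trans ?_
  congr 1
  · exact (Fintype.sum_bijective (toK G A (n := n)) ⟨toK_inj G A, toK_surj G A⟩
      (fun u => (G.explored A x y r).C z.1 (Sum.inl u))
      (fun w => (G.explored A x y r).C z.1 w.1) fun u => rfl)
  · exact Finset.sum_congr rfl fun j _ => C_left_inr G A x y hy r j z

lemma Lm_rowsum (r : Fin n → ℝ) (z : K G A n) :
    ∑ w, Lm G A x y r z w = ∑ j, if z = Y G A y hy j then cf G x y r j else 0 := by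
  have hloop : (G.explored A x y r).C z.1 z.1 = 0 := (G.explored A x y r).loopless z.1
  have : ∀ w : K G A n, Lm G A x y r z w =
      (if z = w then (∑ q : SumV G A n, (G.explored A x y r).C z.1 q) +
        (G.explored A x y r).C z.1 w.1 else 0) - (G.explored A x y r).C z.1 w.1 := by
    intro w
    rw [Lm_apply]
    split_ifs with h
    · subst h; rw [hloop]; ring
    · ring
  rw [Finset.sum_congr rfl fun w _ => this w, Finset.sum_sub_distrib, Finset.sum_ite_eq,
    if_pos (Finset.mem_univ z), hloop, add_zero, sum_C_split G A x y hy]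
  ring

lemma Lm_entry_symm (r : Fin n → ℝ) (z w : K G A n) :
    Lm G A x y r z w = Lm G A x y r w z := by
  rw [Lm_apply, Lm_apply]
  rcases eq_or_ne z w with rfl | h
  · rfl
  · rw [if_neg h, if_neg h.symm]; exact congrArg Neg.neg ((G.explored A x y r).symm _ _)

lemma Lm_isHermitian (r : Fin n → ℝ) : (Lm G A x y r).IsHermitian := by
  ext z w
  rw [Matrix.conjTranspose_apply, Lm_entry_symm G A x y r z w]
  exact star_trivial _

lemma Lm_update (r : Fin n → ℝ) (i : Fin n) (s : ℝ) :
    Lm G A x y (Function.update r i s) = Lm G A x y r +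
      (max 0 (G.R (x i) (y i) - s)⁻¹ - cf G x y r i) •
        Matrix.single (Y G A y hy i) (Y G A y hy i) 1 := by
  ext z w
  rw [Matrix.add_apply, Matrix.smul_apply, smul_eq_mul, Lm_apply, Lm_apply]
  rcases eq_or_ne z w with rfl | h
  · rw [if_pos rfl, if_pos rfl, sum_C_split G A x y hy, sum_C_split G A x y hy]
    have hsum : ∀ j, (if z = Y G A y hy j then cf G x y (Function.update r i s) j else 0) =
        (if z = Y G A y hy j then cf G x y r j else 0) +
          (if j = i then (if z = Y G A y hy i then max 0 (G.R (x i) (y i) - s)⁻¹ - cf G x y r i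
            else 0) else 0) := by
      intro j
      by_cases hj : j = i
      · subst hj
        simp only [cf, Function.update_self, if_pos rfl]
        split_ifs <;> ring
      · rw [if_neg hj, add_zero, cf, cf, Function.update_of_ne hj]
    rw [Finset.sum_congr rfl fun w _ => C_int_const G A x y (Function.update r i s) r z w,
      Finset.sum_congr rfl fun j _ => hsum j, Finset.sum_add_distrib, Finset.sum_ite_eq',
      if_pos (Finset.mem_univ i)]
    rcases eq_or_ne z (Y G A y hy i) with rfl | hz
    · rw [if_pos rfl, Matrix.single_apply_same]; ring
    · have h0 : Matrix.single (Y G A y hy i) (Y G A y hy i) (1:ℝ) z z = 0 :=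
        Matrix.single_apply_of_ne _ _ _ _ _ (by tauto)
      rw [if_neg hz]; simp only [h0, mul_zero]; ring
  · have h0 : Matrix.single (Y G A y hy i) (Y G A y hy i) (1:ℝ) z w = 0 :=
      Matrix.single_apply_of_ne _ _ _ _ _ (by rintro ⟨rfl, rfl⟩; exact h rfl)
    rw [if_neg h, if_neg h]
    simp only [h0, mul_zero, add_zero]
    exact congrArg Neg.neg (C_int_const G A x y (Function.update r i s) r z w)

def Cin (r : Fin n → ℝ) (z w : K G A n) : ℝ := (G.explored A x y r).C z.1 w.1

def dd (r : Fin n → ℝ) (z : K G A n) : ℝ :=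
  ∑ j, if z = Y G A y hy j then cf G x y r j else 0

lemma lap_decomp (r : Fin n → ℝ) (z w : K G A n) :
    Lm G A x y r z w =
      (if z = w then (∑ w', Cin G A x y r z w') + dd G A x y hy r z else 0)
        - Cin G A x y r z w := by
  rw [Lm_apply]
  rcases eq_or_ne z w with rfl | h
  · rw [if_pos rfl, if_pos rfl, sum_C_split G A x y hy]
    have hz : Cin G A x y r z z = 0 := (G.explored A x y r).loopless z.1
    show _ = _ - Cin G A x y r z z
    rw [hz, sub_zero]; rfl
  · rw [if_neg h, if_neg h, zero_sub]; rfl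

lemma quad_eq (r : Fin n → ℝ) (v : K G A n → ℝ) :
    v ⬝ᵥ (Lm G A x y r *ᵥ v) =
      (1/2) * (∑ z, ∑ w, Cin G A x y r z w * (v z - v w)^2) +
        ∑ z, dd G A x y hy r z * v z ^ 2 := by
  have hCsym : ∀ z w, Cin G A x y r z w = Cin G A x y r w z :=
    fun z w => (G.explored A x y r).symm _ _
  have h1 : v ⬝ᵥ (Lm G A x y r *ᵥ v) = ∑ z, ∑ w, v z * (Lm G A x y r z w * v w) := by
    simp [dotProduct, Matrix.mulVec, Finset.mul_sum]
  have h2 : ∀ z w : K G A n, v z * (Lm G A x y r z w * v w) =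
      (if z = w then ((∑ w', Cin G A x y r z w') + dd G A x y hy r z) * (v z * v w) else 0)
        - Cin G A x y r z w * (v z * v w) := by
    intro z w; rw [lap_decomp G A x y hy]; split_ifs <;> ring
  rw [h1]
  simp only [h2, Finset.sum_sub_distrib, Finset.sum_ite_eq, Finset.mem_univ, if_true]
  have hA : ∑ z, ((∑ w, Cin G A x y r z w) + dd G A x y hy r z) * (v z * v z) =
      (∑ z, ∑ w, Cin G A x y r z w * v z^2) + ∑ z, dd G A x y hy r z * v z^2 := by
    rw [← Finset.sum_add_distrib]
    refine Finset.sum_congr rfl fun z _ => ?_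
    rw [add_mul, Finset.sum_mul]
    congr 1
    · exact Finset.sum_congr rfl fun w _ => by ring
    · ring
  have hswap : ∑ z, ∑ w, Cin G A x y r z w * v w^2 = ∑ z, ∑ w, Cin G A x y r z w * v z^2 := by
    rw [Finset.sum_comm]
    exact Finset.sum_congr rfl fun z _ => Finset.sum_congr rfl fun w _ => by rw [hCsym]
  have hB : ∑ z, ∑ w, Cin G A x y r z w * (v z - v w)^2 =
      (∑ z, ∑ w, Cin G A x y r z w * v z^2) + (∑ z, ∑ w, Cin G A x y r z w * v z^2)
        - 2 * ∑ z, ∑ w, Cin G A x y r z w * (v z * v w) := by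
    have e1 : ∀ z w : K G A n, Cin G A x y r z w * (v z - v w)^2 =
        Cin G A x y r z w * v z^2 + Cin G A x y r z w * v w^2
          - 2 * (Cin G A x y r z w * (v z * v w)) := fun z w => by ring
    simp only [e1, Finset.sum_sub_distrib, Finset.sum_add_distrib, ← Finset.mul_sum]
    rw [hswap]
  linarith [hA, hB]

lemma walk_zero (hall : ∀ u ∈ A, ∀ v : G.V, G.Adj u v → ∃ i, x i = u ∧ y i = v)
    (v : K G A n → ℝ)
    (hedge : ∀ u w : {p : G.V // p ∉ A}, G.Adj u.1 w.1 → v (toK G A u) = v (toK G A w))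
    (hvY : ∀ j, v (Y G A y hy j) = 0) :
    ∀ l : List G.V, l.Chain' G.Adj → ∀ a ∈ A, l.getLast? = some a →
      ∀ u, ∀ hu : u ∉ A, l.head? = some u → v (toK G A ⟨u, hu⟩) = 0 := by
  intro l
  induction l with
  | nil => intro _ a _ h _ _ hh; simp at hh
  | cons b t ih =>
    intro hch a ha hlast u hu hhead
    have hub : b = u := by simpa using hhead
    subst hub
    cases t with
    | nil =>
      have : b = a := by simpa using hlast
      exact absurd (this ▸ ha) hu
    | cons w t' =>
      have hadj : G.Adj b w := (List.isChain_cons_cons.mp hch).1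
      have hch' : (w :: t').Chain' G.Adj := (List.isChain_cons_cons.mp hch).2
      have hlast' : (w :: t').getLast? = some a := by
        exact List.getLast?_cons_cons ▸ hlast
      by_cases hw : w ∈ A
      · obtain ⟨j, hxj, hyj⟩ := hall w hw b (by show 0 < G.C w b; rw [G.symm w b]; exact hadj)
        have : (⟨b, hu⟩ : {p : G.V // p ∉ A}) = ⟨y j, hy j⟩ := by
          apply Subtype.ext; exact hyj.symm
        rw [this]
        exact hvY j
      · rw [hedge ⟨b, hu⟩ ⟨w, hw⟩ hadj]
        exact ih hch' a ha hlast' w hw rfl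

include hy in
lemma lm_posDef (hconn : G.Connected) (hx : ∀ i, x i ∈ A)
    (hall : ∀ u ∈ A, ∀ v : G.V, G.Adj u v → ∃ i, x i = u ∧ y i = v)
    (r : Fin n → ℝ) (hcf : ∀ i, 0 < cf G x y r i) (i0 : Fin n) :
    (Lm G A x y r).PosDef := by
  have hCnn : ∀ z w, 0 ≤ Cin G A x y r z w := fun z w => (G.explored A x y r).nonneg _ _
  have hddnn : ∀ z, 0 ≤ dd G A x y hy r z := fun z =>
    Finset.sum_nonneg fun j _ => by split_ifs; exacts [(hcf j).le, le_rfl]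
  refine Matrix.PosDef.of_dotProduct_mulVec_pos (Lm_isHermitian G A x y r) fun v hv => ?_
  have hstar : star v = v := funext fun z => star_trivial _
  rw [hstar, quad_eq G A x y hy]
  have hT1 : 0 ≤ ∑ z, ∑ w, Cin G A x y r z w * (v z - v w)^2 :=
    Finset.sum_nonneg fun z _ => Finset.sum_nonneg fun w _ =>
      mul_nonneg (hCnn z w) (sq_nonneg _)
  have hT2 : 0 ≤ ∑ z, dd G A x y hy r z * v z ^ 2 :=
    Finset.sum_nonneg fun z _ => mul_nonneg (hddnn z) (sq_nonneg _)
  rcases lt_or_eq_of_le (by linarith :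
      (0:ℝ) ≤ (1/2) * (∑ z, ∑ w, Cin G A x y r z w * (v z - v w)^2)
        + ∑ z, dd G A x y hy r z * v z ^ 2) with hlt | heq
  · exact hlt
  -- derive a contradiction with v ≠ 0
  exfalso
  have hz1 : ∑ z, ∑ w, Cin G A x y r z w * (v z - v w)^2 = 0 := by linarith
  have hz2 : ∑ z, dd G A x y hy r z * v z ^ 2 = 0 := by linarith
  have hterm1 : ∀ z w : K G A n, Cin G A x y r z w * (v z - v w)^2 = 0 := by
    intro z w
    have h' := (Finset.sum_eq_zero_iff_of_nonneg fun z _ =>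
      Finset.sum_nonneg fun w _ => mul_nonneg (hCnn z w) (sq_nonneg _)).mp hz1 z
        (Finset.mem_univ z)
    exact (Finset.sum_eq_zero_iff_of_nonneg fun w _ =>
      mul_nonneg (hCnn z w) (sq_nonneg _)).mp h' w (Finset.mem_univ w)
  have hterm2 : ∀ z : K G A n, dd G A x y hy r z * v z ^ 2 = 0 :=
    fun z => (Finset.sum_eq_zero_iff_of_nonneg fun z _ =>
      mul_nonneg (hddnn z) (sq_nonneg _)).mp hz2 z (Finset.mem_univ z)
  have hvY : ∀ j, v (Y G A y hy j) = 0 := by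
    intro j
    have hddpos : 0 < dd G A x y hy r (Y G A y hy j) := by
      have hle : cf G x y r j ≤ dd G A x y hy r (Y G A y hy j) := by
        have := Finset.single_le_sum (f := fun j' =>
            if Y G A y hy j = Y G A y hy j' then cf G x y r j' else 0)
          (fun j' _ => by split_ifs; exacts [(hcf j').le, le_rfl])
          (Finset.mem_univ j)
        simpa [dd] using this
      exact lt_of_lt_of_le (hcf j) hle
    have := hterm2 (Y G A y hy j)
    have hsq : v (Y G A y hy j) ^ 2 = 0 := by
      rcases mul_eq_zero.mp this with h | h
      · exact absurd h hddpos.ne'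
      · exact h
    exact pow_eq_zero_iff two_ne_zero |>.mp hsq
  have hedge : ∀ u w : {p : G.V // p ∉ A}, G.Adj u.1 w.1 → v (toK G A u) = v (toK G A w) := by
    intro u w hadj'
    have hC : Cin G A x y r (toK G A u) (toK G A w) = G.C u.1 w.1 := rfl
    have h0 := hterm1 (toK G A u) (toK G A w)
    rw [hC] at h0
    rcases mul_eq_zero.mp h0 with h | h
    · exact absurd h (ne_of_gt hadj')
    · exact sub_eq_zero.mp (pow_eq_zero_iff two_ne_zero |>.mp h)
  have hall0 : ∀ z : K G A n, v z = 0 := by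
    intro z
    obtain ⟨u, rfl⟩ := toK_surj G A z
    obtain ⟨l, hl⟩ := hconn u.1 (x i0)
    exact walk_zero G A x y hy hall v hedge hvY l hl.1 (x i0) (hx i0) hl.2.2 u.1 u.2 hl.2.1
  exact hv (funext hall0)

lemma gm_row (r : Fin n → ℝ) (hunit : IsUnit (Lm G A x y r)) (i : Fin n) :
    ∑ j', cf G x y r j' * gm G A x y r (Y G A y hy i) (Y G A y hy j') = 1 := by
  have hGL : gm G A x y r * Lm G A x y r = 1 :=
    Matrix.nonsing_inv_mul _ ((Matrix.isUnit_iff_isUnit_det _).mp hunit)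
  calc ∑ j', cf G x y r j' * gm G A x y r (Y G A y hy i) (Y G A y hy j')
      = ∑ j', ∑ w : K G A n, if w = Y G A y hy j' then
          gm G A x y r (Y G A y hy i) w * cf G x y r j' else 0 := by
        refine Finset.sum_congr rfl fun j' _ => ?_
        rw [Finset.sum_ite_eq', if_pos (Finset.mem_univ _), mul_comm]
    _ = ∑ w : K G A n, ∑ j', if w = Y G A y hy j' then
          gm G A x y r (Y G A y hy i) w * cf G x y r j' else 0 := Finset.sum_comm
    _ = ∑ w : K G A n, gm G A x y r (Y G A y hy i) w * ∑ j', if w = Y G A y hy j' then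
          cf G x y r j' else 0 := by
        refine Finset.sum_congr rfl fun w _ => ?_
        rw [Finset.mul_sum]
        exact Finset.sum_congr rfl fun j' _ => by split_ifs <;> simp
    _ = ∑ w : K G A n, gm G A x y r (Y G A y hy i) w * ∑ q, Lm G A x y r w q := by
        refine Finset.sum_congr rfl fun w _ => ?_
        rw [Lm_rowsum G A x y hy]
    _ = ∑ w : K G A n, ∑ q, gm G A x y r (Y G A y hy i) w * Lm G A x y r w q := by
        exact Finset.sum_congr rfl fun w _ => Finset.mul_sum _ _ _
    _ = ∑ q, ∑ w : K G A n, gm G A x y r (Y G A y hy i) w * Lm G A x y r w q :=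
        Finset.sum_comm
    _ = ∑ q, (gm G A x y r * Lm G A x y r) (Y G A y hy i) q := by
        exact Finset.sum_congr rfl fun q _ => (Matrix.mul_apply).symm
    _ = 1 := by rw [hGL]; simp [Matrix.one_apply]

lemma hasDerivAt_cf (R0 : ℝ) {s0 : ℝ} (h : s0 < R0) :
    HasDerivAt (fun s => max 0 (R0 - s)⁻¹) (((R0 - s0)⁻¹)^2) s0 := by
  have hne : R0 - s0 ≠ 0 := (sub_pos.mpr h).ne'
  have h1 : HasDerivAt (fun s : ℝ => (R0 - s)⁻¹) (((R0 - s0)⁻¹)^2) s0 := by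
    have h0 : HasDerivAt (fun s : ℝ => R0 - s) (-1) s0 := by
      simpa using (hasDerivAt_id s0).const_sub R0
    have h2 := h0.inv hne
    have h3 : ((R0 - s0)⁻¹)^2 = - -1 / (R0 - s0)^2 := by rw [neg_neg, one_div, inv_pow]
    rw [h3]; exact h2
  apply h1.congr_of_eventuallyEq
  filter_upwards [Iio_mem_nhds h] with s hs
  rw [max_eq_right (inv_nonneg.mpr (sub_pos.mpr hs).le)]

def entryLM (a b : K G A n) : Matrix (K G A n) (K G A n) ℝ →ₗ[ℝ] ℝ where
  toFun M := M a b
  map_add' _ _ := rfl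
  map_smul' _ _ := rfl

lemma mul_std_mul_apply (P Q : Matrix (K G A n) (K G A n) ℝ) (c : ℝ) (k a b : K G A n) :
    ((P * Matrix.single k k c * Q) : Matrix (K G A n) (K G A n) ℝ) a b =
      c * (P a k * Q k b) := by
  rw [Matrix.mul_assoc, Matrix.mul_apply]
  rw [Finset.sum_eq_single k
    (fun w _ hw => by simp only [Matrix.single_mul_apply_of_ne (h := hw), mul_zero])
    (fun h => absurd (Finset.mem_univ k) h)]
  simp only [Matrix.single_mul_apply_same]
  ring

section CalcSection

attribute [local instance] Matrix.linftyOpNormedRing Matrix.linftyOpNormedAlgebra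

include hy in
lemma hasDerivAt_Lm (r : Fin n → ℝ) (i : Fin n) (hri : r i < G.R (x i) (y i)) :
    HasDerivAt (fun s => Lm G A x y (Function.update r i s))
      ((((G.R (x i) (y i) - r i)⁻¹)^2) •
        Matrix.single (Y G A y hy i) (Y G A y hy i) (1:ℝ)) (r i) := by
  have h := (((hasDerivAt_cf (G.R (x i) (y i)) hri).sub_const (cf G x y r i)).smul_const
    (Matrix.single (Y G A y hy i) (Y G A y hy i) (1:ℝ))).const_add (Lm G A x y r)
  exact h.congr_of_eventuallyEq
    (Filter.Eventually.of_forall fun s => Lm_update G A x y hy r i s)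

set_option synthInstance.maxHeartbeats 1000000 in
include hy in
lemma hasDerivAt_gm (r : Fin n → ℝ) (i : Fin n) (hri : r i < G.R (x i) (y i))
    (hunit : IsUnit (Lm G A x y r)) :
    HasDerivAt (fun s => gm G A x y (Function.update r i s))
      (-((((G.R (x i) (y i) - r i)⁻¹)^2) •
        (gm G A x y r * Matrix.single (Y G A y hy i) (Y G A y hy i) (1:ℝ) *
          gm G A x y r))) (r i) := by
  obtain ⟨u, hu⟩ := hunit
  have hL := hasDerivAt_Lm G A x y hy r i hri
  have hpt : Lm G A x y (Function.update r i (r i)) = (u : Matrix (K G A n) (K G A n) ℝ) := by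
    rw [Function.update_eq_self, hu]
  have hginv : HasFDerivAt (Ring.inverse : Matrix (K G A n) (K G A n) ℝ → _)
      (-(ContinuousLinearMap.mulLeftRight ℝ _ (↑u⁻¹) (↑u⁻¹)))
      (Lm G A x y (Function.update r i (r i))) := by
    rw [hpt]; exact hasFDerivAt_ringInverse u
  have hcomp := hginv.comp_hasDerivAt (r i) hL
  have hfun : (Ring.inverse ∘ fun s => Lm G A x y (Function.update r i s)) =
      fun s => gm G A x y (Function.update r i s) := by
    funext s
    rw [Function.comp_apply, gm, Matrix.nonsing_inv_eq_ringInverse]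
  rw [hfun] at hcomp
  have huinv : ((u⁻¹ : (Matrix (K G A n) (K G A n) ℝ)ˣ) : Matrix (K G A n) (K G A n) ℝ)
      = gm G A x y r := by rw [Matrix.coe_units_inv, hu]; rfl
  refine HasDerivAt.congr_deriv hcomp ?_
  rw [ContinuousLinearMap.neg_apply, ContinuousLinearMap.mulLeftRight_apply, huinv,
    Matrix.smul_single]
  ext a b
  rw [Matrix.neg_apply, Matrix.neg_apply, Matrix.smul_apply, mul_std_mul_apply,
    mul_std_mul_apply, smul_eq_mul, smul_eq_mul]
  ring

include hy in
lemma hasDerivAt_gm_entry (r : Fin n → ℝ) (i : Fin n) (hri : r i < G.R (x i) (y i))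
    (hunit : IsUnit (Lm G A x y r)) (a b : K G A n) :
    HasDerivAt (fun s => gm G A x y (Function.update r i s) a b)
      (-((((G.R (x i) (y i) - r i)⁻¹)^2) * (gm G A x y r a (Y G A y hy i) *
        gm G A x y r (Y G A y hy i) b))) (r i) := by
  have hG := hasDerivAt_gm G A x y hy r i hri hunit
  have hφ := ((entryLM G A (n := n) a b).toContinuousLinearMap.hasFDerivAt).comp_hasDerivAt
    (r i) hG
  refine hφ.congr_deriv (Eq.symm ?_)
  show _ = (entryLM G A (n := n) a b) _
  change _ = (-((((G.R (x i) (y i) - r i)⁻¹)^2) • (gm G A x y r *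
    Matrix.single (Y G A y hy i) (Y G A y hy i) (1:ℝ) * gm G A x y r))) a b
  simp only [Matrix.neg_apply, Matrix.smul_apply, smul_eq_mul, mul_std_mul_apply]
  ring

end CalcSection

lemma gm_symm (r : Fin n → ℝ) (z w : K G A n) : gm G A x y r z w = gm G A x y r w z := by
  have hLt : (Lm G A x y r)ᵀ = Lm G A x y r :=
    Matrix.ext fun a b => by rw [Matrix.transpose_apply]; exact Lm_entry_symm G A x y r b a
  have hgt : (gm G A x y r)ᵀ = gm G A x y r := by
    rw [gm, Matrix.transpose_nonsing_inv, hLt]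
  conv_lhs => rw [← hgt]
  rw [Matrix.transpose_apply]

end Stmt12Aux

end Stmt12Aux

end

/-- Hadamard-type variational formulas for the effective conductances of the
partially explored network: `∂_{rᵢ} C^eff_{ij} = C^eff_{ij} ∑_{j' ≠ i} C^eff_{ij'}` and, for
`i ∉ {j, j'}`, `∂_{rᵢ} C^eff_{jj'} = -C^eff_{ij} C^eff_{ij'}`. -/
theorem stmt12 (G : WGraph) (hconn : G.Connected) (A : Finset G.V) {n : ℕ}
    (x y : Fin n → G.V) (hx : ∀ i, x i ∈ A) (hy : ∀ i, y i ∉ A)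
    (hadj : ∀ i, G.Adj (x i) (y i))
    (hdistinct : Function.Injective fun i => (x i, y i))
    (hnoAA : ∀ u ∈ A, ∀ v ∈ A, G.C u v = 0)
    (hall : ∀ u ∈ A, ∀ v : G.V, G.Adj u v → ∃ i, x i = u ∧ y i = v)
    (r : Fin n → ℝ) (hr : ∀ i, r i ∈ Set.Ioo 0 (G.R (x i) (y i))) :
    (∀ i j : Fin n, j ≠ i →
      HasDerivAt (fun t => G.CeffExplored A x y (Function.update r i t) i j)
        (G.CeffExplored A x y r i j *
          ∑ j' ∈ Finset.univ.erase i, G.CeffExplored A x y r i j') (r i)) ∧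
    (∀ i j j' : Fin n, i ≠ j → i ≠ j' → j ≠ j' →
      HasDerivAt (fun t => G.CeffExplored A x y (Function.update r i t) j j')
        (-(G.CeffExplored A x y r i j * G.CeffExplored A x y r i j')) (r i)) := by
    classical
  have hcf : ∀ i, 0 < Stmt12Aux.cf G x y r i := fun i =>
    lt_of_lt_of_le (inv_pos.mpr (sub_pos.mpr (hr i).2)) (le_max_right _ _)
  have hcfeq : ∀ i, Stmt12Aux.cf G x y r i = (G.R (x i) (y i) - r i)⁻¹ := fun i =>
    max_eq_right (inv_nonneg.mpr (sub_pos.mpr (hr i).2).le)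
  constructor
  · intro i j hji
    have hpos := Stmt12Aux.lm_posDef G A x y hy hconn hx hall r hcf i
    have hunit : IsUnit (Stmt12Aux.Lm G A x y r) := hpos.isUnit
    have hsum := Stmt12Aux.gm_row G A x y hy r hunit i
    have hci := Stmt12Aux.hasDerivAt_cf (G.R (x i) (y i)) (hr i).2
    have hge := Stmt12Aux.hasDerivAt_gm_entry G A x y hy r i (hr i).2 hunit
      (Stmt12Aux.Y G A y hy i) (Stmt12Aux.Y G A y hy j)
    have H := (hci.mul hge).mul_const (Stmt12Aux.cf G x y r j)
    have H2 : HasDerivAt (fun t => G.CeffExplored A x y (Function.update r i t) i j) _ (r i) :=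
      H.congr_of_eventuallyEq (Filter.Eventually.of_forall (fun s => by
        show G.CeffExplored A x y (Function.update r i s) i j = _
        rw [Stmt12Aux.ceff_eq G A x y hy]
        simp only [Stmt12Aux.cf, Function.update_self, Function.update_of_ne hji, Pi.mul_apply]
        ring))
    convert H2 using 1
    rw [Function.update_eq_self i r]
    rw [Finset.sum_erase_eq_sub (Finset.mem_univ i)]
    have hssum : ∑ j', G.CeffExplored A x y r i j' = Stmt12Aux.cf G x y r i := by
      rw [Finset.sum_congr rfl fun j' _ => by
        rw [Stmt12Aux.ceff_eq G A x y hy r i j', mul_assoc]]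
      rw [← Finset.mul_sum, hsum, mul_one]
    have hmax : max (0:ℝ) ((G.R (x i) (y i) - r i)⁻¹) = (G.R (x i) (y i) - r i)⁻¹ :=
      max_eq_right (inv_nonneg.mpr (sub_pos.mpr (hr i).2).le)
    rw [hssum, Stmt12Aux.ceff_eq G A x y hy r i j, Stmt12Aux.ceff_eq G A x y hy r i i,
      hcfeq i, hcfeq j, hmax]
    ring
  · intro i j j' hij hij' _
    have hpos := Stmt12Aux.lm_posDef G A x y hy hconn hx hall r hcf i
    have hunit : IsUnit (Stmt12Aux.Lm G A x y r) := hpos.isUnit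
    have hge := Stmt12Aux.hasDerivAt_gm_entry G A x y hy r i (hr i).2 hunit
      (Stmt12Aux.Y G A y hy j) (Stmt12Aux.Y G A y hy j')
    have H := hge.const_mul (Stmt12Aux.cf G x y r j * Stmt12Aux.cf G x y r j')
    have H2 : HasDerivAt (fun t => G.CeffExplored A x y (Function.update r i t) j j') _ (r i) :=
      H.congr_of_eventuallyEq (Filter.Eventually.of_forall (fun s => by
        show G.CeffExplored A x y (Function.update r i s) j j' = _
        rw [Stmt12Aux.ceff_eq G A x y hy]
        simp only [Stmt12Aux.cf, Function.update_of_ne (Ne.symm hij),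
          Function.update_of_ne (Ne.symm hij')]))
    convert H2 using 1
    rw [Stmt12Aux.ceff_eq G A x y hy r i j, Stmt12Aux.ceff_eq G A x y hy r i j',
      Stmt12Aux.gm_symm G A x y r (Stmt12Aux.Y G A y hy j) (Stmt12Aux.Y G A y hy i),
      hcfeq i, hcfeq j, hcfeq j']
    ring
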